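/- Let G be a group with a bi-ordering < and φ ∈ Aut(G). Then < is simultaneously a left order and a right order on the generalized Alexander quandle Alex(G, φ) if and only if for every g ∈ G with 1 < g one has 1 < φ(g) < g. -/
import Mathlib


/-- Let `<` (here `r`) be a bi-ordering of a group `G` and `φ ∈ Aut(G)`. Then `r` is both
a left and a right order on the generalized Alexander quandle `Alex(G, φ)`, whose
operation is `x * y = φ(x y⁻¹) y`, if and only if `1 < φ(g) < g` for all `g` with `1 < g`. -/
theorem alexander_quandle_biorder_iff (G : Type*) [Group G] (r : G → G → Prop)
    (hsto : IsStrictTotalOrder G r)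
    (hleft : ∀ a b c : G, r a b → r (c * a) (c * b))
    (hright : ∀ a b c : G, r a b → r (a * c) (b * c))
    (φ : G ≃* G) :
    ((∀ x y z : G, r x y → r (φ (x * z⁻¹) * z) (φ (y * z⁻¹) * z)) ∧
     (∀ x y z : G, r x y → r (φ (z * x⁻¹) * x) (φ (z * y⁻¹) * y))) ↔
    (∀ g : G, r 1 g → r 1 (φ g) ∧ r (φ g) g) := by
  constructor
  · rintro ⟨L, R⟩ g hg
    constructor
    · have := L 1 g 1 hg
      simpa using this
    · have h := R 1 g 1 hg
      simp only [mul_one, inv_one, one_mul, map_one] at h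
      -- h : r 1 (φ g⁻¹ * g)
      have h2 := hleft _ _ (φ g) h
      rw [mul_one, map_inv] at h2
      rw [show φ g * ((φ g)⁻¹ * g) = g by group] at h2
      exact h2
  · intro H
    have hmono : ∀ a b : G, r a b → r (φ a) (φ b) := by
      intro a b hab
      have h1 : r 1 (b * a⁻¹) := by simpa using hright a b a⁻¹ hab
      have h2 := (H _ h1).1
      have h3 := hright _ _ (φ a) h2
      rw [one_mul, map_mul, map_inv] at h3
      rw [show φ b * (φ a)⁻¹ * φ a = φ b by group] at h3
      exact h3
    constructor
    · intro x y z hxy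
      exact hright _ _ z (hmono _ _ (hright x y z⁻¹ hxy))
    · intro x y z hxy
      have hg : r 1 (y * x⁻¹) := by simpa using hright x y x⁻¹ hxy
      have h1 := (H _ hg).2
      -- r (φ (y x⁻¹)) (y x⁻¹)
      have h2 := hleft _ _ (φ (y * x⁻¹))⁻¹ h1
      rw [inv_mul_cancel] at h2
      have h3 := hright _ _ x h2
      rw [one_mul] at h3
      have h4 := hleft _ _ (φ (z * x⁻¹)) h3
      rw [show φ (z * x⁻¹) * ((φ (y * x⁻¹))⁻¹ * (y * x⁻¹) * x) = φ (z * y⁻¹) * y by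
        simp only [map_mul, map_inv]; group] at h4
      exact h4
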